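/- Let K be a field, p ∈ Kⁿ, and let I, J be nonzero ideals of R = K[x₁,…,xₙ]. Then ord_p(I·J) = ord_p(I) + ord_p(J). Equivalently, for nonzero polynomials f, g: if f ∉ m_p^{a+1} and g ∉ m_p^{c+1}, then f·g ∉ m_p^{a+c+1}. -/

import Mathlib

/-- The maximal ideal `m_p` of polynomials vanishing at the point `p ∈ Kⁿ`. -/
noncomputable def vanishingIdeal {K : Type*} [Field K] {n : ℕ} (p : Fin n → K) :
    Ideal (MvPolynomial (Fin n) K) :=
  RingHom.ker (MvPolynomial.eval p)

/-- `ord_p(I)`: the largest `m` with `I ⊆ m_p^m` (for a nonzero ideal `I`). -/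
noncomputable def ordIdeal {K : Type*} [Field K] {n : ℕ} (p : Fin n → K)
    (I : Ideal (MvPolynomial (Fin n) K)) : ℕ :=
  sSup {m : ℕ | I ≤ vanishingIdeal p ^ m}

namespace Stmt3Aux

open MvPolynomial

variable {K : Type*} [Field K] {n : ℕ}

lemma degree_add' (a b : Fin n →₀ ℕ) : (a + b).degree = a.degree + b.degree := by
  simp [Finsupp.degree_eq_weight_one, map_add]

lemma mem_vanishing_zero (f : MvPolynomial (Fin n) K) :
    f ∈ _root_.vanishingIdeal (0 : Fin n → K) ↔ coeff 0 f = 0 := by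
  simp [_root_.vanishingIdeal, RingHom.mem_ker, eval_zero, constantCoeff_eq]

lemma monomial_mem_pow (k : ℕ) : ∀ (d : Fin n →₀ ℕ) (r : K), k ≤ d.degree →
    monomial d r ∈ _root_.vanishingIdeal (0 : Fin n → K) ^ k := by
  induction k with
  | zero => intro d r _; simp
  | succ k ih =>
    intro d r hk
    have hd : d ≠ 0 := by
      rintro rfl
      simp [map_zero] at hk
    obtain ⟨i, hi⟩ : ∃ i, d i ≠ 0 := by
      by_contra h
      push_neg at h
      exact hd (Finsupp.ext h)
    set d' : Fin n →₀ ℕ := d - Finsupp.single i 1 with hd'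
    have hsum : Finsupp.single i 1 + d' = d := by
      ext j
      simp only [Finsupp.add_apply, Finsupp.tsub_apply, Finsupp.single_apply, hd']
      rcases eq_or_ne i j with rfl | h
      · simp; omega
      · simp [h]
    have hdeg : d.degree = 1 + d'.degree := by
      rw [← hsum, degree_add']
      simp [Finsupp.degree_single]
    have : monomial d r = X i * monomial d' r := by
      rw [← hsum, monomial_single_add, pow_one]
    rw [this, pow_succ']
    exact Ideal.mul_mem_mul ((mem_vanishing_zero _).2 (coeff_zero_X i))
      (ih d' r (by omega))

lemma mem_pow_vanishing_zero (k : ℕ) (f : MvPolynomial (Fin n) K) :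
    f ∈ _root_.vanishingIdeal (0 : Fin n → K) ^ k ↔
      ∀ d : Fin n →₀ ℕ, d.degree < k → coeff d f = 0 := by
  constructor
  · induction k generalizing f with
    | zero => intro _ d hd; omega
    | succ k ih =>
      intro hf
      rw [pow_succ] at hf
      refine Submodule.mul_induction_on hf ?_ ?_
      · intro a ha b hb d hd
        have ha' := ih _ ha
        have hb' : coeff 0 b = 0 := (mem_vanishing_zero b).1 hb
        rw [coeff_mul]
        refine Finset.sum_eq_zero fun x hx => ?_
        rw [Finset.HasAntidiagonal.mem_antidiagonal] at hx
        have hdeg : x.1.degree + x.2.degree = d.degree := by rw [← degree_add', hx]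
        rcases lt_or_ge x.1.degree k with h | h
        · rw [ha' _ h, zero_mul]
        · have : x.2.degree = 0 := by omega
          rw [Finsupp.degree_eq_zero_iff] at this
          rw [this, hb', mul_zero]
      · intro x y hx hy d hd
        rw [coeff_add, hx d hd, hy d hd, add_zero]
  · intro h
    rw [← support_sum_monomial_coeff f]
    refine Ideal.sum_mem _ fun d hd => ?_
    refine monomial_mem_pow k d _ ?_
    by_contra hlt
    exact (mem_support_iff.1 hd) (h d (by omega))

/-- minimal degree of a nonzero polynomial -/
noncomputable def minDeg (f : MvPolynomial (Fin n) K) (hf : f ≠ 0) : ℕ :=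
  (f.support.image Finsupp.degree).min' (by
    simp [Finset.image_nonempty, MvPolynomial.support_nonempty, hf])

lemma coeff_eq_zero_of_lt_minDeg {f : MvPolynomial (Fin n) K} (hf : f ≠ 0) {d : Fin n →₀ ℕ}
    (hd : d.degree < minDeg f hf) : coeff d f = 0 := by
  by_contra h
  have : d.degree ∈ f.support.image Finsupp.degree :=
    Finset.mem_image_of_mem _ (mem_support_iff.2 h)
  have hm : minDeg f hf ≤ d.degree := Finset.min'_le _ _ this
  omega

lemma exists_minDeg {f : MvPolynomial (Fin n) K} (hf : f ≠ 0) :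
    ∃ d ∈ f.support, d.degree = minDeg f hf := by
  obtain ⟨d, hd, he⟩ := Finset.mem_image.1 ((f.support.image Finsupp.degree).min'_mem (by
    simp [Finset.image_nonempty, MvPolynomial.support_nonempty, hf]))
  exact ⟨d, hd, he⟩

lemma minDeg_le {f : MvPolynomial (Fin n) K} (hf : f ≠ 0) {a : ℕ}
    (h : f ∉ _root_.vanishingIdeal (0 : Fin n → K) ^ (a + 1)) : minDeg f hf ≤ a := by
  rw [mem_pow_vanishing_zero] at h
  push_neg at h
  obtain ⟨d, hd, hne⟩ := h
  have : d.degree ∈ f.support.image Finsupp.degree :=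
    Finset.mem_image_of_mem _ (mem_support_iff.2 hne)
  exact le_trans (Finset.min'_le _ _ this) (by omega)

lemma key_zero (f g : MvPolynomial (Fin n) K) (a c : ℕ) (hf : f ≠ 0) (hg : g ≠ 0)
    (hfa : f ∉ _root_.vanishingIdeal (0 : Fin n → K) ^ (a + 1))
    (hgc : g ∉ _root_.vanishingIdeal (0 : Fin n → K) ^ (c + 1)) :
    f * g ∉ _root_.vanishingIdeal (0 : Fin n → K) ^ (a + c + 1) := by
  set a' := minDeg f hf with ha'
  set c' := minDeg g hg with hc'
  have haa : a' ≤ a := minDeg_le hf hfa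
  have hcc : c' ≤ c := minDeg_le hg hgc
  set F := homogeneousComponent a' f with hF
  set G := homogeneousComponent c' g with hG
  have hFne : F ≠ 0 := by
    obtain ⟨d, hd, hde⟩ := exists_minDeg hf
    intro h0
    have := coeff_homogeneousComponent a' f d
    rw [← hF, h0, coeff_zero, if_pos hde] at this
    exact (mem_support_iff.1 hd) this.symm
  have hGne : G ≠ 0 := by
    obtain ⟨d, hd, hde⟩ := exists_minDeg hg
    intro h0
    have := coeff_homogeneousComponent c' g d
    rw [← hG, h0, coeff_zero, if_pos hde] at this
    exact (mem_support_iff.1 hd) this.symm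
  have hFGne : F * G ≠ 0 := mul_ne_zero hFne hGne
  obtain ⟨e, he⟩ : ∃ e, coeff e (F * G) ≠ 0 := by
    by_contra h
    push_neg at h
    exact hFGne (by ext d; simp [h])
  have hFGhom : (F * G).IsHomogeneous (a' + c') :=
    (homogeneousComponent_isHomogeneous a' f).mul (homogeneousComponent_isHomogeneous c' g)
  have hedeg : e.degree = a' + c' := by
    have := hFGhom he
    rwa [Finsupp.degree_eq_weight_one]
  have hcoeff : coeff e (f * g) = coeff e (F * G) := by
    rw [coeff_mul, coeff_mul]
    refine Finset.sum_congr rfl fun x hx => ?_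
    rw [Finset.HasAntidiagonal.mem_antidiagonal] at hx
    have hdeg : x.1.degree + x.2.degree = a' + c' := by rw [← degree_add', hx, hedeg]
    have c1 := coeff_homogeneousComponent a' f x.1
    have c2 := coeff_homogeneousComponent c' g x.2
    rcases lt_trichotomy x.1.degree a' with h | h | h
    · rw [coeff_eq_zero_of_lt_minDeg hf h, hF, c1, if_neg (by omega), zero_mul, zero_mul]
    · have h2 : x.2.degree = c' := by omega
      rw [hF, hG, c1, c2, if_pos h, if_pos h2]
    · have h2 : x.2.degree < c' := by omega
      rw [coeff_eq_zero_of_lt_minDeg hg h2, hG, c2, if_neg (by omega), mul_zero, mul_zero]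
  rw [mem_pow_vanishing_zero]
  push_neg
  exact ⟨e, by omega, by rw [hcoeff]; exact he⟩

/-- Translation automorphism `X i ↦ X i + p i`. -/
noncomputable def shiftEquiv (p : Fin n → K) :
    MvPolynomial (Fin n) K ≃ₐ[K] MvPolynomial (Fin n) K :=
  AlgEquiv.ofAlgHom (aeval fun i => X i + C (p i)) (aeval fun i => X i - C (p i))
    (by ext i : 1; simp) (by ext i : 1; simp)

lemma eval_zero_shift (p : Fin n → K) (f : MvPolynomial (Fin n) K) :
    eval (0 : Fin n → K) (shiftEquiv p f) = eval p f := by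
  have h : (eval (0 : Fin n → K)).comp
      ((shiftEquiv p : MvPolynomial (Fin n) K →ₐ[K] MvPolynomial (Fin n) K) :
        MvPolynomial (Fin n) K →+* MvPolynomial (Fin n) K) = eval p := by
    apply ringHom_ext
    · intro r; simp [shiftEquiv]
    · intro i; simp [shiftEquiv]
  exact RingHom.congr_fun h f

lemma mem_pow_shift (p : Fin n → K) (k : ℕ) (f : MvPolynomial (Fin n) K) :
    f ∈ _root_.vanishingIdeal p ^ k ↔
      shiftEquiv p f ∈ _root_.vanishingIdeal (0 : Fin n → K) ^ k := by
  set e : MvPolynomial (Fin n) K ≃+* MvPolynomial (Fin n) K := (shiftEquiv p).toRingEquiv with he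
  have h1 : _root_.vanishingIdeal p
      = Ideal.comap e (_root_.vanishingIdeal (0 : Fin n → K)) := by
    ext f
    simp only [_root_.vanishingIdeal, RingHom.mem_ker, Ideal.mem_comap]
    show (eval p) f = 0 ↔ (eval 0) (shiftEquiv p f) = 0
    rw [eval_zero_shift]
  have h2 : _root_.vanishingIdeal p ^ k
      = Ideal.comap e (_root_.vanishingIdeal (0 : Fin n → K) ^ k) := by
    rw [h1, ← Ideal.map_symm, ← Ideal.map_symm, Ideal.map_pow]
  rw [h2, Ideal.mem_comap]
  rfl

lemma key (p : Fin n → K) (f g : MvPolynomial (Fin n) K) (a c : ℕ)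
    (hf : f ≠ 0) (hg : g ≠ 0)
    (hfa : f ∉ _root_.vanishingIdeal p ^ (a + 1))
    (hgc : g ∉ _root_.vanishingIdeal p ^ (c + 1)) :
    f * g ∉ _root_.vanishingIdeal p ^ (a + c + 1) := by
  rw [mem_pow_shift] at hfa hgc ⊢
  rw [map_mul]
  have hf' : shiftEquiv p f ≠ 0 := by
    simpa using (shiftEquiv p).injective.ne_iff.2 hf
  have hg' : shiftEquiv p g ≠ 0 := by
    simpa using (shiftEquiv p).injective.ne_iff.2 hg
  exact key_zero _ _ a c hf' hg' hfa hgc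

lemma exists_not_mem_pow (p : Fin n → K) {f : MvPolynomial (Fin n) K} (hf : f ≠ 0) :
    ∃ N, f ∉ _root_.vanishingIdeal p ^ N := by
  have hg : shiftEquiv p f ≠ 0 := by
    simpa using (shiftEquiv p).injective.ne_iff.2 hf
  obtain ⟨d, hd⟩ := MvPolynomial.support_nonempty.2 hg
  refine ⟨d.degree + 1, ?_⟩
  rw [mem_pow_shift, mem_pow_vanishing_zero]
  push_neg
  exact ⟨d, by omega, mem_support_iff.1 hd⟩

lemma ord_spec (p : Fin n → K) (I : Ideal (MvPolynomial (Fin n) K)) (hI : I ≠ ⊥) :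
    I ≤ _root_.vanishingIdeal p ^ ordIdeal p I ∧
      ¬ I ≤ _root_.vanishingIdeal p ^ (ordIdeal p I + 1) := by
  obtain ⟨f, hfI, hf⟩ := Submodule.exists_mem_ne_zero_of_ne_bot hI
  obtain ⟨N, hN⟩ := exists_not_mem_pow p hf
  have hbd : ∀ m ∈ {m : ℕ | I ≤ _root_.vanishingIdeal p ^ m}, m ≤ N := by
    intro m hm
    by_contra h
    exact hN (Ideal.pow_le_pow_right (by omega) (hm hfI))
  have hb : BddAbove {m : ℕ | I ≤ _root_.vanishingIdeal p ^ m} := ⟨N, hbd⟩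
  have h0 : (0 : ℕ) ∈ {m : ℕ | I ≤ _root_.vanishingIdeal p ^ m} := by
    simp [Set.mem_setOf_eq]
  have hmem : ordIdeal p I ∈ {m : ℕ | I ≤ _root_.vanishingIdeal p ^ m} :=
    Nat.sSup_mem ⟨0, h0⟩ hb
  refine ⟨hmem, fun h => ?_⟩
  have : ordIdeal p I + 1 ≤ ordIdeal p I := le_csSup hb h
  omega

end Stmt3Aux

open Stmt3Aux in
/-- For nonzero ideals `I, J` of `K[x₁,…,xₙ]` and a point `p`,
`ord_p(I·J) = ord_p(I) + ord_p(J)`.  Equivalently, for nonzero polynomials `f, g`: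
if `f ∉ m_p^{a+1}` and `g ∉ m_p^{c+1}`, then `f·g ∉ m_p^{a+c+1}`. -/
theorem stmt_3 {K : Type*} [Field K] {n : ℕ} (p : Fin n → K)
    (I J : Ideal (MvPolynomial (Fin n) K)) (hI : I ≠ ⊥) (hJ : J ≠ ⊥) :
    ordIdeal p (I * J) = ordIdeal p I + ordIdeal p J ∧
    (∀ (f g : MvPolynomial (Fin n) K) (a c : ℕ), f ≠ 0 → g ≠ 0 →
      f ∉ vanishingIdeal p ^ (a + 1) → g ∉ vanishingIdeal p ^ (c + 1) →
      f * g ∉ vanishingIdeal p ^ (a + c + 1)) := by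
  refine ⟨?_, fun f g a c hf hg hfa hgc => key p f g a c hf hg hfa hgc⟩
  obtain ⟨hIle, hInot⟩ := ord_spec p I hI
  obtain ⟨hJle, hJnot⟩ := ord_spec p J hJ
  set a := ordIdeal p I
  set c := ordIdeal p J
  obtain ⟨f, hfI, hfn⟩ := SetLike.not_le_iff_exists.1 hInot
  obtain ⟨g, hgJ, hgn⟩ := SetLike.not_le_iff_exists.1 hJnot
  have hf : f ≠ 0 := by rintro rfl; exact hfn (Submodule.zero_mem _)
  have hg : g ≠ 0 := by rintro rfl; exact hgn (Submodule.zero_mem _)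
  have hfg : f * g ∈ I * J := Ideal.mul_mem_mul hfI hgJ
  have hfgn : f * g ∉ vanishingIdeal p ^ (a + c + 1) := key p f g a c hf hg hfn hgn
  have hmem : (a + c) ∈ {m : ℕ | I * J ≤ vanishingIdeal p ^ m} := by
    rw [Set.mem_setOf_eq, pow_add]
    exact mul_le_mul' hIle hJle
  have hbd : ∀ m ∈ {m : ℕ | I * J ≤ vanishingIdeal p ^ m}, m ≤ a + c := by
    intro m hm
    by_contra h
    exact hfgn (Ideal.pow_le_pow_right (by omega) (hm hfg))
  refine le_antisymm (csSup_le ⟨a + c, hmem⟩ hbd) (le_csSup ⟨a + c, hbd⟩ hmem)
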